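/- arXiv:1801.07114 — 2 statements merged into one kernel-verified Lean document; each statement's English description precedes it below -/
import Mathlib

section
/- Let x^L < 0 < x^U and suppose x_c ∈ [x^L, 0] satisfies 1 - tanh²(x_c) = (tanh(x^U) - tanh(x_c))/(x^U - x_c). Define F(x) = tanh(x) for x ≤ x_c and F(x) = tanh(x_c) + ((tanh(x^U) - tanh(x_c))/(x^U - x_c))·(x - x_c) for x > x_c. Then F is convex on [x^L, x^U] and F(x) ≤ tanh(x) for all x ∈ [x^L, x^U]. -/
open Real Set Filter Topology

lemma my_hasDerivAt_tanh (x : ℝ) : HasDerivAt Real.tanh (1 - Real.tanh x ^ 2) x := by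
  have hc : Real.cosh x ≠ 0 := (Real.cosh_pos (x := x)).ne'
  have h := (Real.hasDerivAt_sinh x).div (Real.hasDerivAt_cosh x) hc
  have heq : (Real.cosh x * Real.cosh x - Real.sinh x * Real.sinh x) / Real.cosh x ^ 2
      = 1 - Real.tanh x ^ 2 := by
    rw [Real.tanh_eq_sinh_div_cosh, div_pow]
    field_simp
  have : (Real.sinh / Real.cosh) = Real.tanh := by
    ext y; rw [Real.tanh_eq_sinh_div_cosh, Pi.div_apply]
  rw [this, heq] at h
  exact h

lemma my_tanh_sq_lt_one (x : ℝ) : Real.tanh x ^ 2 < 1 := by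
  have hc := Real.cosh_pos (x := x)
  have h := Real.cosh_sq_sub_sinh_sq x
  rw [Real.tanh_eq_sinh_div_cosh, div_pow]
  rw [div_lt_one (by positivity)]
  nlinarith

lemma my_tanh_mono : StrictMono Real.tanh := by
  have hd : ∀ x, 0 < deriv Real.tanh x := by
    intro x
    rw [(my_hasDerivAt_tanh x).deriv]
    nlinarith [my_tanh_sq_lt_one x]
  refine strictMono_of_deriv_pos hd

lemma my_tanh_nonpos {x : ℝ} (h : x ≤ 0) : Real.tanh x ≤ 0 := by
  calc Real.tanh x ≤ Real.tanh 0 := my_tanh_mono.monotone h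
  _ = 0 := Real.tanh_zero

lemma my_tanh_diff : Differentiable ℝ Real.tanh :=
  fun y => (my_hasDerivAt_tanh y).differentiableAt

lemma my_tanh_cont : Continuous Real.tanh := my_tanh_diff.continuous

lemma my_junction {f g F : ℝ → ℝ} {c a : ℝ} (hf : HasDerivAt f a c) (hg : HasDerivAt g a c)
    (hle : ∀ x ≤ c, F x = f x) (hge : ∀ x, c ≤ x → F x = g x) : HasDerivAt F a c := by
  rw [hasDerivAt_iff_tendsto_slope]
  rw [← nhdsLT_sup_nhdsGT c, tendsto_sup]
  constructor
  · have h1 : Tendsto (slope f c) (𝓝[<] c) (𝓝 a) :=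
      (hasDerivAt_iff_tendsto_slope.1 hf).mono_left
        (nhdsWithin_mono c (fun x hx => ne_of_lt hx))
    refine h1.congr' ?_
    filter_upwards [eventually_mem_nhdsWithin] with x (hx : x ∈ Iio c)
    rw [slope_def_field, slope_def_field, hle x hx.le, hle c le_rfl]
  · have h1 : Tendsto (slope g c) (𝓝[>] c) (𝓝 a) :=
      (hasDerivAt_iff_tendsto_slope.1 hg).mono_left
        (nhdsWithin_mono c (fun x hx => ne_of_gt hx))
    refine h1.congr' ?_
    filter_upwards [eventually_mem_nhdsWithin] with x (hx : x ∈ Ioi c)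
    rw [slope_def_field, slope_def_field, hge x (le_of_lt hx), hge c le_rfl]

theorem tanh_convex_envelope (xL xU xc : ℝ) (h1 : xL < 0) (h2 : 0 < xU)
    (hc : xc ∈ Set.Icc xL 0)
    (htan : 1 - Real.tanh xc ^ 2 = (Real.tanh xU - Real.tanh xc) / (xU - xc))
    (F : ℝ → ℝ)
    (hF : ∀ x, F x = if x ≤ xc then Real.tanh x
      else Real.tanh xc + ((Real.tanh xU - Real.tanh xc) / (xU - xc)) * (x - xc)) :
    ConvexOn ℝ (Set.Icc xL xU) F ∧ ∀ x ∈ Set.Icc xL xU, F x ≤ Real.tanh x := by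
  obtain ⟨hxLxc, hxc0⟩ := hc
  set s := (Real.tanh xU - Real.tanh xc) / (xU - xc) with hs_def
  have hs : 1 - Real.tanh xc ^ 2 = s := htan
  have hUc : 0 < xU - xc := by linarith
  have hB : s * (xU - xc) = Real.tanh xU - Real.tanh xc := div_mul_cancel₀ _ hUc.ne'
  -- monotonicity of the derivative on nonpositives
  have monoA : ∀ a b : ℝ, a ≤ b → b ≤ 0 → 1 - Real.tanh a ^ 2 ≤ 1 - Real.tanh b ^ 2 := by
    intro a b hab hb0
    have h1 : Real.tanh a ≤ Real.tanh b := my_tanh_mono.monotone hab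
    have h2 : Real.tanh b ≤ 0 := my_tanh_nonpos hb0
    nlinarith
  -- the tangent line
  set g : ℝ → ℝ := fun x => Real.tanh xc + s * (x - xc) with hg_def
  have hg' : ∀ x : ℝ, HasDerivAt g s x := by
    intro x
    have : HasDerivAt (fun x : ℝ => Real.tanh xc + s * (x - xc)) (s * 1) x :=
      ((((hasDerivAt_id x).sub_const xc)).const_mul s).const_add _
    rw [mul_one] at this; exact this
  have hle : ∀ x ≤ xc, F x = Real.tanh x := fun x hx => by rw [hF x, if_pos hx]
  have hge : ∀ x, xc ≤ x → F x = g x := by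
    intro x hx
    rw [hF x]
    split_ifs with h'
    · have hxx : x = xc := le_antisymm h' hx
      subst hxx
      simp [hg_def]
    · rfl
  -- derivative of F everywhere
  set d : ℝ → ℝ := fun x => if x ≤ xc then 1 - Real.tanh x ^ 2 else s with hd_def
  have FD : ∀ x, HasDerivAt F (d x) x := by
    intro x
    rcases lt_trichotomy x xc with h | h | h
    · have hFf : F =ᶠ[nhds x] Real.tanh := by
        filter_upwards [Iio_mem_nhds h] with y (hy : y < xc)
        exact hle y hy.le
      simp only [hd_def, if_pos h.le]
      exact (my_hasDerivAt_tanh x).congr_of_eventuallyEq hFf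
    · subst h
      have hd : d x = 1 - Real.tanh x ^ 2 := if_pos le_rfl
      rw [hd]
      exact my_junction (my_hasDerivAt_tanh x) (hs ▸ hg' x) hle hge
    · have hFg : F =ᶠ[nhds x] g := by
        filter_upwards [Ioi_mem_nhds h] with y (hy : xc < y)
        exact hge y hy.le
      simp only [hd_def, if_neg (not_le.2 h)]
      exact (hg' x).congr_of_eventuallyEq hFg
  have hFdiff : Differentiable ℝ F := fun x => (FD x).differentiableAt
  have hFderiv : deriv F = d := funext fun x => (FD x).deriv
  have hdmono : Monotone d := by
    intro a b hab
    simp only [hd_def]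
    split_ifs with ha hb hb
    · exact monoA a b hab (hb.trans hxc0)
    · have := monoA a xc ha hxc0
      linarith [hs]
    · exact absurd (hab.trans hb) ha
    · exact le_rfl
  constructor
  · exact (Monotone.convexOn_univ_of_deriv hFdiff (hFderiv ▸ hdmono)).subset
      (subset_univ _) (convex_Icc _ _)
  · intro x hx
    rw [hF x]
    split_ifs with hxxc
    · exact le_rfl
    push_neg at hxxc
    -- key: value of the line at 0 is ≤ 0
    have key0 : Real.tanh xc + s * (0 - xc) ≤ 0 := by
      rcases eq_or_lt_of_le hxc0 with h | h
      · rw [h]; simp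
      · obtain ⟨ξ, hξ, hslope⟩ := exists_hasDerivAt_eq_slope Real.tanh
          (fun y => 1 - Real.tanh y ^ 2) h my_tanh_cont.continuousOn
          (fun y _ => my_hasDerivAt_tanh y)
        have hA : s ≤ 1 - Real.tanh ξ ^ 2 := hs ▸ monoA xc ξ hξ.1.le hξ.2.le
        have h2 := mul_le_mul_of_nonneg_right (hA.trans_eq hslope)
          (by linarith : (0:ℝ) ≤ 0 - xc)
        rw [div_mul_cancel₀ _ (by linarith : (0:ℝ) - xc ≠ 0)] at h2
        simp only [Real.tanh_zero] at h2
        linarith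
    by_cases hx0 : x ≤ 0
    · -- MVT on [xc, x]
      obtain ⟨ξ, hξ, hslope⟩ := exists_hasDerivAt_eq_slope Real.tanh
        (fun y => 1 - Real.tanh y ^ 2) hxxc my_tanh_cont.continuousOn
        (fun y _ => my_hasDerivAt_tanh y)
      have hA : s ≤ 1 - Real.tanh ξ ^ 2 := hs ▸ monoA xc ξ hξ.1.le (hξ.2.le.trans hx0)
      have h2 := mul_le_mul_of_nonneg_right (hA.trans_eq hslope)
        (by linarith : (0:ℝ) ≤ x - xc)
      rw [div_mul_cancel₀ _ (by linarith : x - xc ≠ 0)] at h2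
      linarith
    · push_neg at hx0
      have hconc : ConcaveOn ℝ (Ici (0:ℝ)) Real.tanh := by
        apply AntitoneOn.concaveOn_of_deriv (convex_Ici 0) my_tanh_cont.continuousOn
          (my_tanh_diff.differentiableOn)
        intro a ha b hb hab
        rw [interior_Ici] at ha hb
        rw [(my_hasDerivAt_tanh a).deriv, (my_hasDerivAt_tanh b).deriv]
        have h0a : 0 ≤ Real.tanh a := by
          have := my_tanh_mono.monotone (le_of_lt ha)
          simpa using this
        have hab' : Real.tanh a ≤ Real.tanh b := my_tanh_mono.monotone hab
        nlinarith
      set t := x / xU with ht_def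
      have ht0 : 0 ≤ t := by positivity
      have ht1 : t ≤ 1 := (div_le_one h2).2 hx.2
      have hx_eq : t * xU = x := div_mul_cancel₀ x h2.ne'
      have hcomb := hconc.2 (self_mem_Ici) (mem_Ici.2 h2.le)
        (by linarith : (0:ℝ) ≤ 1 - t) ht0 (by ring)
      simp only [smul_eq_mul, mul_zero, zero_add, Real.tanh_zero, hx_eq] at hcomb
      -- hcomb : (1 - t) * 0 + t * tanh xU ≤ tanh x  (roughly)
      have hLxU : Real.tanh xc + s * (xU - xc) = Real.tanh xU := by rw [hB]; ring
      calc Real.tanh xc + s * (x - xc)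
          = (1 - t) * (Real.tanh xc + s * (0 - xc))
            + t * (Real.tanh xc + s * (xU - xc)) := by rw [← hx_eq]; ring
        _ ≤ (1 - t) * 0 + t * (Real.tanh xc + s * (xU - xc)) := by
            have := mul_le_mul_of_nonneg_left key0 (by linarith : (0:ℝ) ≤ 1 - t)
            linarith
        _ = t * Real.tanh xU := by rw [hLxU]; ring
        _ ≤ Real.tanh x := by linarith [hcomb]
end

section
/- For any x^L > 0 there exists a unique x_c ≥ 0 with 1 - tanh²(x_c) = (tanh(x_c) - tanh(-x^L))/(x_c + x^L), where uniqueness follows from strict monotonicity of the difference of the two sides on [0, ∞). -/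
open Real Filter Set

lemma one_sub_tanh_sq (x : ℝ) : 1 - Real.tanh x ^ 2 = 1 / Real.cosh x ^ 2 := by
  rw [Real.tanh_eq_sinh_div_cosh, div_pow]
  have hc : Real.cosh x ^ 2 ≠ 0 := by positivity
  field_simp
  try nlinarith [Real.cosh_sq_sub_sinh_sq x]

lemma tanh_hasDerivAt (x : ℝ) : HasDerivAt Real.tanh (1 / Real.cosh x ^ 2) x := by
  have h := (Real.hasDerivAt_sinh x).div (Real.hasDerivAt_cosh x) (Real.cosh_pos x).ne'
  have he : Real.tanh = fun x => Real.sinh x / Real.cosh x :=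
    funext fun x => Real.tanh_eq_sinh_div_cosh x
  rw [he]
  refine h.congr_deriv ?_
  have := Real.cosh_sq_sub_sinh_sq x
  field_simp
  nlinarith

lemma tanh_nonneg {x : ℝ} (hx : 0 ≤ x) : 0 ≤ Real.tanh x := by
  rw [Real.tanh_eq_sinh_div_cosh]
  refine div_nonneg ?_ (Real.cosh_pos x).le
  rcases hx.eq_or_lt with h|h
  · simp [← h]
  · exact (Real.sinh_pos_iff.mpr h).le

lemma tanh_pos' {x : ℝ} (hx : 0 < x) : 0 < Real.tanh x := by
  rw [Real.tanh_eq_sinh_div_cosh]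
  exact div_pos (by rwa [Real.sinh_pos_iff]) (Real.cosh_pos x)

lemma tanh_lt_self {x : ℝ} (hx : 0 < x) : Real.tanh x < x := by
  have hmono : StrictMonoOn (fun y => y - Real.tanh y) (Set.Ici 0) := by
    apply strictMonoOn_of_deriv_pos (convex_Ici 0)
    · exact (continuous_id.sub (Real.continuous_sinh.div Real.continuous_cosh
        fun y => (Real.cosh_pos y).ne')).continuousOn.congr
        fun y _ => by simp [Real.tanh_eq_sinh_div_cosh]
    · intro y hy
      rw [interior_Ici] at hy
      have hd : HasDerivAt (fun y => y - Real.tanh y) (1 - 1 / Real.cosh y ^ 2) y :=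
        (hasDerivAt_id y).sub (tanh_hasDerivAt y)
      rw [hd.deriv]
      have h1 : 1 < Real.cosh y := Real.one_lt_cosh.mpr (ne_of_gt hy)
      have : 1 / Real.cosh y ^ 2 < 1 := by
        rw [div_lt_one (by positivity)]; nlinarith
      linarith
  have := hmono Set.self_mem_Ici (Set.mem_Ici.mpr hx.le) hx
  simpa using this

theorem tanh_tangency_exists_unique_concave (xL : ℝ) (h : 0 < xL) :
    ∃! xc : ℝ, 0 ≤ xc ∧
      1 - Real.tanh xc ^ 2 = (Real.tanh xc - Real.tanh (-xL)) / (xc + xL) := by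
  set g : ℝ → ℝ := fun x => (1 - Real.tanh x ^ 2) * (x + xL) - (Real.tanh x - Real.tanh (-xL))
    with hgdef
  -- derivative of g
  have hderiv : ∀ x : ℝ, HasDerivAt g (-2 * Real.tanh x * (1 / Real.cosh x ^ 2) * (x + xL)) x := by
    intro x
    have h2 : HasDerivAt (fun y => 1 - Real.tanh y ^ 2)
        (-(2 * Real.tanh x * (1 / Real.cosh x ^ 2))) x := by
      have := (hasDerivAt_const x (1:ℝ)).sub ((tanh_hasDerivAt x).pow 2)
      exact this.congr_deriv (by simp [mul_comm, mul_assoc, mul_left_comm])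
    have h3 : HasDerivAt (fun y : ℝ => y + xL) 1 x := (hasDerivAt_id x).add_const xL
    have h5 := (h2.mul h3).sub ((tanh_hasDerivAt x).sub_const (Real.tanh (-xL)))
    refine h5.congr_deriv ?_
    rw [one_sub_tanh_sq]
    ring
  have hcont : Continuous g := by
    have : Differentiable ℝ g := fun x => (hderiv x).differentiableAt
    exact this.continuous
  -- strict anti on Ici 0
  have hanti : StrictAntiOn g (Set.Ici 0) := by
    apply strictAntiOn_of_deriv_neg (convex_Ici 0) hcont.continuousOn
    intro x hx
    rw [interior_Ici] at hx
    rw [(hderiv x).deriv]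
    have hx' : 0 < x := hx
    have h1 : 0 < Real.tanh x := tanh_pos' hx'
    have h2 : 0 < 1 / Real.cosh x ^ 2 := by positivity
    have h3 : 0 < x + xL := by linarith
    have := mul_pos (mul_pos h1 h2) h3
    nlinarith
  -- g 0 > 0
  have hg0 : 0 < g 0 := by
    have := tanh_lt_self h
    simp only [hgdef, Real.tanh_zero, Real.tanh_neg]
    ring_nf
    nlinarith [this]
  -- find x₀ ≥ 0 with g x₀ < 0
  have htend : Tendsto (fun x : ℝ => 4 * Real.exp (-(2 * x)) * (x + xL)) atTop (nhds 0) := by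
    have f1 : Tendsto (fun x : ℝ => x * Real.exp (-x)) atTop (nhds 0) := by
      simpa using Real.tendsto_pow_mul_exp_neg_atTop_nhds_zero 1
    have h2x : Tendsto (fun x : ℝ => 2 * x) atTop atTop := by
      refine Filter.tendsto_atTop_atTop.mpr fun b => ⟨max b 0, fun a ha => ?_⟩
      have h1 := le_trans (le_max_left b 0) ha
      have h2 := le_trans (le_max_right b 0) ha
      linarith
    have f2 : Tendsto (fun x : ℝ => (2 * x) * Real.exp (-(2 * x))) atTop (nhds 0) :=
      f1.comp h2x
    have f3 : Tendsto (fun x : ℝ => Real.exp (-(2 * x))) atTop (nhds 0) :=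
      Real.tendsto_exp_atBot.comp (tendsto_neg_atBot_iff.mpr h2x)
    have f4 : Tendsto (fun x : ℝ => 4 * ((1/2) * ((2 * x) * Real.exp (-(2 * x)))
        + xL * Real.exp (-(2 * x)))) atTop (nhds 0) := by
      have := ((f2.const_mul (1/2:ℝ)).add (f3.const_mul xL)).const_mul (4:ℝ)
      simpa using this
    convert f4 using 2 with x
    ring
  have htanhpos : 0 < Real.tanh xL := tanh_pos' h
  have hev : ∀ᶠ x : ℝ in atTop, 4 * Real.exp (-(2 * x)) * (x + xL) < Real.tanh xL :=
    htend.eventually_lt_const htanhpos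
  obtain ⟨x₀, hx₀e, hx₀0⟩ := (hev.and (eventually_ge_atTop (0:ℝ))).exists
  have hgx0 : g x₀ < 0 := by
    have hb : 1 / Real.cosh x₀ ^ 2 ≤ 4 * Real.exp (-(2 * x₀)) := by
      have hc : Real.exp x₀ / 2 ≤ Real.cosh x₀ := by
        rw [Real.cosh_eq]
        have := (Real.exp_pos (-x₀)).le
        linarith
      have hcp := Real.cosh_pos x₀
      have hq : Real.exp x₀ ^ 2 / 4 ≤ Real.cosh x₀ ^ 2 := by nlinarith [Real.exp_pos x₀]
      rw [div_le_iff₀ (by positivity)]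
      have h4 : 4 * Real.exp (-(2*x₀)) * (Real.exp x₀ ^ 2 / 4) = 1 := by
        have hsq : Real.exp x₀ ^ 2 = Real.exp (2 * x₀) := by
          rw [sq, ← Real.exp_add]; ring_nf
        rw [hsq, Real.exp_neg]
        field_simp
      calc (1:ℝ) = 4 * Real.exp (-(2*x₀)) * (Real.exp x₀ ^ 2 / 4) := h4.symm
        _ ≤ 4 * Real.exp (-(2*x₀)) * Real.cosh x₀ ^ 2 := by
            apply mul_le_mul_of_nonneg_left hq (by positivity)
    have hxl : 0 < x₀ + xL := by linarith
    have ht0 : 0 ≤ Real.tanh x₀ := tanh_nonneg hx₀0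
    have : g x₀ ≤ 4 * Real.exp (-(2 * x₀)) * (x₀ + xL) - Real.tanh xL := by
      simp only [hgdef, one_sub_tanh_sq, Real.tanh_neg]
      have : 1 / Real.cosh x₀ ^ 2 * (x₀ + xL) ≤ 4 * Real.exp (-(2 * x₀)) * (x₀ + xL) :=
        mul_le_mul_of_nonneg_right hb hxl.le
      linarith
    linarith
  -- IVT
  have h01 : (0:ℝ) ≤ x₀ := hx₀0
  have hiv := intermediate_value_Icc' h01 hcont.continuousOn
  have h0mem : (0:ℝ) ∈ Set.Icc (g x₀) (g 0) := ⟨hgx0.le, hg0.le⟩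
  obtain ⟨xc, hxcmem, hxceq⟩ := hiv h0mem
  have hxc0 : 0 ≤ xc := hxcmem.1
  -- equivalence between equation and g = 0
  have hequiv : ∀ y : ℝ, 0 ≤ y →
      ((1 - Real.tanh y ^ 2 = (Real.tanh y - Real.tanh (-xL)) / (y + xL)) ↔ g y = 0) := by
    intro y hy
    have hyxl : y + xL ≠ 0 := by positivity
    have hgy : g y = (1 - Real.tanh y ^ 2) * (y + xL) - (Real.tanh y - Real.tanh (-xL)) := rfl
    rw [eq_div_iff hyxl, hgy]
    constructor <;> intro h' <;> linarith
  refine ⟨xc, ⟨hxc0, (hequiv xc hxc0).mpr hxceq⟩, ?_⟩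
  rintro y ⟨hy0, hyeq⟩
  exact hanti.injOn hy0 hxc0 (by rw [(hequiv y hy0).mp hyeq, hxceq])
end
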